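/- Let B = [[a, a g, b], [a ḡ, a|g|^2, c], [b̄, c̄, d]] be a 3 × 3 complex positive semidefinite matrix where a, d ≥ 0 are real and g, b, c ∈ C. Then either a = 0 (in which case b = c = 0) or c = b ḡ; in either case the 2 × 2 matrix [[a, b], [a ḡ, c]] is singular. -/

import Mathlib

open Matrix BigOperators

/-- Complete homogeneous symmetric polynomial `h_k`, as a function of a point `x ∈ F^N`. -/
def hfun {F : Type*} [CommRing F] {N : ℕ} (x : Fin N → F) (k : ℕ) : F :=
  ∑ d ∈ Finset.univ.filter (fun d : Fin N → Fin (k + 1) => ∑ i, (d i : ℕ) = k),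
    ∏ i, x i ^ (d i : ℕ)

/-- Schur polynomial (via the Jacobi–Trudi identity) of the partition `lam`,
evaluated at the point `x ∈ F^N`. -/
def schurAt {F : Type*} [CommRing F] {N : ℕ} (x : Fin N → F) (lam : Fin N → ℕ) : F :=
  Matrix.det (Matrix.of fun i j : Fin N =>
    if (i : ℕ) ≤ lam i + (j : ℕ) then hfun x (lam i + (j : ℕ) - (i : ℕ)) else 0)

/-- The hook partition `μ(M,N,j) = (M-N+1, 1^{N-j-1}, 0^j)`. -/
def hookP (M N j : ℕ) : Fin N → ℕ :=
  fun i => if (i : ℕ) = 0 then M - N + 1 else if (i : ℕ) < N - j then 1 else 0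

/-- Vandermonde determinant `Δ_N(x) = ∏_{i<j} (x_i - x_j)`. -/
def vdm {F : Type*} [CommRing F] {N : ℕ} (x : Fin N → F) : F :=
  ∏ i : Fin N, ∏ j ∈ Finset.Ioi i, (x i - x j)

open ComplexOrder in
/-- Structure of a psd `3 × 3` matrix whose leading `2 × 2` block is rank one with
entries in a group orbit: either `a = 0` (and then `b = c = 0`) or `c = b·conj g`;
in either case the indicated `2 × 2` minor is singular. -/
theorem psd_three_by_three_orbit (a d : ℝ) (ha : 0 ≤ a) (hd : 0 ≤ d) (g b c : ℂ)
    (hB : (Matrix.of ![![(a : ℂ), a * g, b],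
        ![(a : ℂ) * (starRingEnd ℂ) g, (a : ℂ) * ((Complex.normSq g : ℝ) : ℂ), c],
        ![(starRingEnd ℂ) b, (starRingEnd ℂ) c, (d : ℂ)]]).PosSemidef) :
    (((a : ℂ) = 0 ∧ b = 0 ∧ c = 0) ∨ c = b * (starRingEnd ℂ) g) ∧
      Matrix.det (Matrix.of ![![(a : ℂ), b], ![(a : ℂ) * (starRingEnd ℂ) g, c]]) = 0 := by
  set w : ℂ := b * (starRingEnd ℂ) g - c with hw
  set s : ℝ := (d + 1)⁻¹ with hs
  have hs0 : 0 < s := by positivity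
  have hs1 : s * (d + 1) = 1 := inv_mul_cancel₀ (by positivity)
  have h := hB.dotProduct_mulVec_nonneg ![g, -1, -(s : ℂ) * (starRingEnd ℂ) w]
  have hval : star ![g, -1, -(s : ℂ) * (starRingEnd ℂ) w] ⬝ᵥ
      (Matrix.of ![![(a : ℂ), a * g, b],
        ![(a : ℂ) * (starRingEnd ℂ) g, (a : ℂ) * ((Complex.normSq g : ℝ) : ℂ), c],
        ![(starRingEnd ℂ) b, (starRingEnd ℂ) c, (d : ℂ)]]) *ᵥ
      ![g, -1, -(s : ℂ) * (starRingEnd ℂ) w] = (((s^2*d - 2*s) * Complex.normSq w : ℝ) : ℂ) := by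
    push_cast
    rw [← Complex.mul_conj w]
    simp only [Matrix.mulVec, dotProduct, Fin.sum_univ_three, Matrix.of_apply,
      Matrix.cons_val', Matrix.cons_val_zero, Matrix.cons_val_one, Matrix.head_cons,
      Matrix.head_fin_const, Matrix.cons_val_two, Matrix.tail_cons, Pi.star_apply,
      RCLike.star_def, hw, map_sub, _root_.map_mul, map_neg, _root_.map_one, Complex.conj_conj,
      Complex.conj_ofReal]
    rw [(Complex.mul_conj g).symm]
    ring
  rw [hval, Complex.zero_le_real] at h
  have hneg : s ^ 2 * d - 2 * s < 0 := by nlinarith [mul_pos hs0 hs0]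
  have hwz : w = 0 := by
    have hns : Complex.normSq w = 0 :=
      le_antisymm (by nlinarith [Complex.normSq_nonneg w]) (Complex.normSq_nonneg w)
    exact Complex.normSq_eq_zero.mp hns
  have key : c = b * (starRingEnd ℂ) g := (sub_eq_zero.mp (hw ▸ hwz)).symm
  refine ⟨Or.inr key, ?_⟩
  simp only [Matrix.det_fin_two, Matrix.of_apply, Matrix.cons_val', Matrix.cons_val_zero,
    Matrix.cons_val_one, Matrix.head_cons, Matrix.head_fin_const, key]
  ring
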